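/- Let b ∈ R^d be s-sparse and a ∈ R^d be K-sparse with K ≤ k. If s ≤ k then H_k(b) = b and hence ‖H_k(b) − a‖₂ ≤ ‖b − a‖₂. If s > k, then ‖H_k(b) − a‖₂ ≤ √ν' ‖b − a‖₂ where ν' = 1 + (ρ' + √((4+ρ')ρ'))/2 and ρ' = min{K, s−k}/(k − K + min{K, s−k}). -/

import Mathlib

open scoped BigOperators
set_option maxHeartbeats 1600000

/-- The ℓ₂ norm of a vector in `ℝ^d`. -/
noncomputable def l2norm {d : ℕ} (v : Fin d → ℝ) : ℝ := Real.sqrt (∑ i, v i ^ 2)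

private lemma beta_root (ρ : ℝ) (hρ : 0 < ρ) :
    ((ρ + Real.sqrt ((4+ρ)*ρ))/2)^2 = ρ*((ρ + Real.sqrt ((4+ρ)*ρ))/2) + ρ ∧
    ρ < (ρ + Real.sqrt ((4+ρ)*ρ))/2 := by
  have hD0 : (0:ℝ) ≤ (4+ρ)*ρ := by nlinarith
  have hSq2 : Real.sqrt ((4+ρ)*ρ) ^ 2 = (4+ρ)*ρ := Real.sq_sqrt hD0
  constructor
  · linear_combination (1/4) * hSq2
  · have h1 : ρ = Real.sqrt (ρ^2) := (Real.sqrt_sq hρ.le).symm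
    have h2 : Real.sqrt (ρ^2) < Real.sqrt ((4+ρ)*ρ) :=
      Real.sqrt_lt_sqrt (sq_nonneg ρ) (by nlinarith)
    nlinarith [h1, h2]

private lemma core_lemma (m q lam C t : ℝ) (hm : 1 ≤ m) (hmq : m ≤ q)
    (hC : 0 ≤ C) (ht : q*lam^2 + C ≤ t) :
    2*lam*Real.sqrt (m*C) + m*lam^2 ≤ ((m/q + Real.sqrt ((4+m/q)*(m/q)))/2) * t := by
  have hq : 0 < q := by linarith
  set ρ := m/q with hρdef
  have hρ0 : 0 < ρ := div_pos (by linarith) hq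
  obtain ⟨hβsq, hβρ⟩ := beta_root ρ hρ0
  set β := (ρ + Real.sqrt ((4+ρ)*ρ))/2 with hβdef
  have hβpos : 0 < β := lt_trans hρ0 hβρ
  set α := β - ρ with hαdef
  have hα : 0 < α := by simp only [hαdef]; linarith
  have hρq : ρ * q = m := by rw [hρdef]; exact div_mul_cancel₀ m hq.ne'
  have hαβq : α * q * β = m := by
    have hab : α * β = ρ := by rw [hαdef]; nlinarith [hβsq]
    calc α * q * β = (α * β) * q := by ring
    _ = ρ * q := by rw [hab]
    _ = m := hρq
  have hkey : 2*lam*Real.sqrt (m*C) ≤ α*q*lam^2 + β*C := by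
    have e1 : Real.sqrt (α*q) * Real.sqrt β = Real.sqrt m := by
      rw [← hαβq]
      exact (Real.sqrt_mul (by positivity) β).symm
    have e2 : Real.sqrt m * Real.sqrt C = Real.sqrt (m*C) :=
      (Real.sqrt_mul (by linarith) C).symm
    have s1 : Real.sqrt (α*q)^2 = α*q := Real.sq_sqrt (by positivity)
    have s2 : Real.sqrt β^2 = β := Real.sq_sqrt hβpos.le
    have s3 : Real.sqrt C^2 = C := Real.sq_sqrt hC
    calc 2*lam*Real.sqrt (m*C)
        = 2*(Real.sqrt (α*q)*lam)*(Real.sqrt β*Real.sqrt C) := by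
          rw [← e2, ← e1]; ring
      _ ≤ (Real.sqrt (α*q)*lam)^2 + (Real.sqrt β*Real.sqrt C)^2 := two_mul_le_add_sq _ _
      _ = α*q*lam^2 + β*C := by rw [mul_pow, mul_pow, s1, s2, s3]
  have hαqm : α*q + m = β*q := by
    rw [← hρq, hαdef]; ring
  calc 2*lam*Real.sqrt (m*C) + m*lam^2
      ≤ (α*q + m)*lam^2 + β*C := by nlinarith [hkey]
    _ = β*(q*lam^2 + C) := by rw [hαqm]; ring
    _ ≤ β*t := by nlinarith [hβpos]

private lemma beta_mono (ρ ρ' : ℝ) (h0 : 0 ≤ ρ) (h : ρ ≤ ρ') :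
    (ρ + Real.sqrt ((4+ρ)*ρ))/2 ≤ (ρ' + Real.sqrt ((4+ρ')*ρ'))/2 := by
  have : Real.sqrt ((4+ρ)*ρ) ≤ Real.sqrt ((4+ρ')*ρ') :=
    Real.sqrt_le_sqrt (by nlinarith)
  linarith

theorem stmt_9 (d k K s : ℕ) (hKk : K ≤ k) (hkd : k ≤ d) (hsd : s ≤ d)
    (b a : Fin d → ℝ)
    (Γ : Finset (Fin d)) (hcard : Γ.card = min k d)
    (htop : ∀ i ∈ Γ, ∀ j ∉ Γ, |b j| ≤ |b i|)
    (hb : ∃ S : Finset (Fin d), S.card ≤ s ∧ ∀ i, b i ≠ 0 → i ∈ S)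
    (ha : ∃ S : Finset (Fin d), S.card ≤ K ∧ ∀ i, a i ≠ 0 → i ∈ S)
    (ρ' ν' : ℝ)
    (hρ' : ρ' = (min K (s - k) : ℝ) / ((k : ℝ) - (K : ℝ) + (min K (s - k) : ℝ)))
    (hν' : ν' = 1 + (ρ' + Real.sqrt ((4 + ρ') * ρ')) / 2) :
    (s ≤ k → ((fun i => if i ∈ Γ then b i else 0) = b ∧
      l2norm (fun i => (if i ∈ Γ then b i else 0) - a i) ≤ l2norm (fun i => b i - a i))) ∧
    (k < s → l2norm (fun i => (if i ∈ Γ then b i else 0) - a i) ≤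
      Real.sqrt ν' * l2norm (fun i => b i - a i)) := by
  obtain ⟨S, hScard, hS⟩ := hb
  obtain ⟨Ω, hΩcard, hΩ⟩ := ha
  have hΓk : Γ.card = k := by rw [hcard]; exact Nat.min_eq_left hkd
  constructor
  · -- case s ≤ k
    intro hsk
    have hbeq : (fun i => if i ∈ Γ then b i else 0) = b := by
      funext i
      by_cases hi : i ∈ Γ
      · simp [hi]
      · simp only [hi, if_false]
        by_contra hbi
        have hne : b i ≠ 0 := fun h => hbi h.symm
        have hsub : insert i Γ ⊆ S := by
          intro j hj
          rcases Finset.mem_insert.mp hj with h | h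
          · exact hS _ (h ▸ hne)
          · refine hS _ fun h0 => ?_
            have h1 := htop j h i hi
            rw [h0, abs_zero] at h1
            exact hne (abs_eq_zero.mp (le_antisymm h1 (abs_nonneg _)))
        have hle := Finset.card_le_card hsub
        rw [Finset.card_insert_of_notMem hi, hΓk] at hle
        omega
    refine ⟨hbeq, ?_⟩
    have heq : (fun i => (if i ∈ Γ then b i else 0) - a i) = fun i => b i - a i := by
      funext i; rw [congrFun hbeq i]
    rw [heq]
  · -- case k < s
    intro hks
    set t := ∑ i, (b i - a i)^2 with htdef
    set N := ∑ i, ((if i ∈ Γ then b i else 0) - a i)^2 with hNdef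
    have ht0 : 0 ≤ t := Finset.sum_nonneg fun i _ => sq_nonneg _
    have hKkR : (K:ℝ) ≤ (k:ℝ) := Nat.cast_le.mpr hKk
    have hsk0 : (0:ℝ) ≤ (s:ℝ) - (k:ℝ) := by
      have : (k:ℝ) ≤ (s:ℝ) := Nat.cast_le.mpr hks.le
      linarith
    have hmin0 : (0:ℝ) ≤ min (K:ℝ) ((s:ℝ) - (k:ℝ)) :=
      le_min (Nat.cast_nonneg K) hsk0
    have hρ'0 : 0 ≤ ρ' := by
      rw [hρ']
      exact div_nonneg hmin0 (by linarith)
    have hν'0 : 0 ≤ ν' := by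
      rw [hν']
      have := Real.sqrt_nonneg ((4 + ρ') * ρ')
      linarith
    suffices hmain : N ≤ ν' * t by
      show Real.sqrt N ≤ Real.sqrt ν' * Real.sqrt t
      rw [← Real.sqrt_mul hν'0]
      exact Real.sqrt_le_sqrt hmain
    -- decomposition
    have hNeq : N = ∑ i ∈ Γ, (b i - a i)^2 + ∑ i ∈ Γᶜ, (a i)^2 := by
      rw [hNdef, ← Finset.sum_add_sum_compl Γ]
      congr 1
      · exact Finset.sum_congr rfl fun i hi => by rw [if_pos hi]
      · exact Finset.sum_congr rfl fun i hi => by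
          rw [if_neg (Finset.mem_compl.mp hi)]; ring
    have hteq : t = ∑ i ∈ Γ, (b i - a i)^2 + ∑ i ∈ Γᶜ, (b i - a i)^2 :=
      (Finset.sum_add_sum_compl Γ _).symm
    classical
    set J := Γᶜ.filter (fun i => a i ≠ 0 ∧ b i ≠ 0) with hJdef
    have hJc : J ⊆ Γᶜ := Finset.filter_subset _ _
    have hΔ : ∑ i ∈ Γᶜ, ((a i)^2 - (b i - a i)^2) ≤
        ∑ i ∈ J, ((a i)^2 - (b i - a i)^2) := by
      rw [← Finset.sum_sdiff hJc]
      have hnp : ∑ i ∈ Γᶜ \ J, ((a i)^2 - (b i - a i)^2) ≤ 0 := by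
        apply Finset.sum_nonpos
        intro i hi
        obtain ⟨hi1, hi2⟩ := Finset.mem_sdiff.mp hi
        by_cases hbz : b i = 0
        · have : (a i)^2 - (b i - a i)^2 = 0 := by rw [hbz]; ring
          linarith
        · have haz : a i = 0 := by
            by_contra haz
            exact hi2 (Finset.mem_filter.mpr ⟨hi1, haz, hbz⟩)
          rw [haz]
          nlinarith [sq_nonneg (b i)]
      linarith
    have hNle : N ≤ t + ∑ i ∈ J, ((a i)^2 - (b i - a i)^2) := by
      have expand : ∑ i ∈ Γᶜ, (a i)^2 =
          ∑ i ∈ Γᶜ, (b i - a i)^2 + ∑ i ∈ Γᶜ, ((a i)^2 - (b i - a i)^2) := by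
        rw [← Finset.sum_add_distrib]
        exact Finset.sum_congr rfl fun i _ => by ring
      rw [hNeq, hteq]
      linarith
    rcases Finset.eq_empty_or_nonempty J with hJe | hJne
    · rw [hJe, Finset.sum_empty] at hNle
      have hν'1 : 1 ≤ ν' := by
        rw [hν']
        have := Real.sqrt_nonneg ((4 + ρ') * ρ')
        linarith
      nlinarith [hNle, ht0, hν'1]
    · obtain ⟨i₀, hi₀⟩ := hJne
      obtain ⟨hi₀c, ha₀, hb₀⟩ := Finset.mem_filter.mp hi₀
      have hi₀Γ : i₀ ∉ Γ := Finset.mem_compl.mp hi₀c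
      have hK1 : 1 ≤ K :=
        le_trans (Finset.card_pos.mpr ⟨i₀, hΩ _ ha₀⟩) hΩcard
      have hΓne : Γ.Nonempty := Finset.card_pos.mp (by omega)
      set lam := Γ.inf' hΓne (fun j => |b j|) with hlamdef
      have hlam0 : 0 ≤ lam := Finset.le_inf' hΓne _ fun j _ => abs_nonneg _
      have hlamub : ∀ i, i ∉ Γ → |b i| ≤ lam := fun i hi =>
        Finset.le_inf' hΓne _ fun j hj => htop j hj i hi
      have hlamlb : ∀ j ∈ Γ, lam ≤ |b j| := fun j hj => Finset.inf'_le _ hj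
      have hΓsupp : ∀ j ∈ Γ, b j ≠ 0 := by
        intro j hj h0
        have h1 := htop j hj i₀ hi₀Γ
        rw [h0, abs_zero] at h1
        exact hb₀ (abs_eq_zero.mp (le_antisymm h1 (abs_nonneg _)))
      have hdisjJΓ : Disjoint J Γ := by
        rw [Finset.disjoint_left]
        intro i hiJ hiΓ
        exact (Finset.mem_compl.mp (hJc hiJ)) hiΓ
      have hJS : J ⊆ S := fun i hi => hS _ (Finset.mem_filter.mp hi).2.2
      have hΓS : Γ ⊆ S := fun j hj => hS _ (hΓsupp j hj)
      have hms : J.card + k ≤ s := by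
        have hsub : J ∪ Γ ⊆ S := Finset.union_subset hJS hΓS
        have h2 := Finset.card_le_card hsub
        rw [Finset.card_union_of_disjoint hdisjJΓ, hΓk] at h2
        omega
      have hJΩ : J ⊆ Ω := fun i hi => hΩ _ (Finset.mem_filter.mp hi).2.1
      have hmK : J.card ≤ K := le_trans (Finset.card_le_card hJΩ) hΩcard
      have hΓΩ : (Γ ∩ Ω).card + J.card ≤ K := by
        have hsub : (Γ ∩ Ω) ∪ J ⊆ Ω :=
          Finset.union_subset Finset.inter_subset_right hJΩ
        have hdis : Disjoint (Γ ∩ Ω) J :=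
          Finset.disjoint_of_subset_left Finset.inter_subset_left hdisjJΓ.symm
        have h2 := Finset.card_le_card hsub
        rw [Finset.card_union_of_disjoint hdis] at h2
        omega
      have hΓOcard : k - K + J.card ≤ (Γ \ Ω).card := by
        have h1 : (Γ \ Ω).card = Γ.card - (Γ ∩ Ω).card := by
          rw [← Finset.sdiff_inter_self_left]
          exact Finset.card_sdiff_of_subset Finset.inter_subset_left
        have h3 : (Γ ∩ Ω).card ≤ Γ.card := Finset.card_le_card Finset.inter_subset_left
        omega
      have hm1J : 1 ≤ J.card := Finset.card_pos.mpr ⟨i₀, hi₀⟩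
      set m : ℝ := (J.card : ℝ) with hmdef
      set q : ℝ := (k:ℝ) - (K:ℝ) + m with hqdef
      have hm1 : (1:ℝ) ≤ m := by simp only [hmdef]; exact_mod_cast hm1J
      have hmq : m ≤ q := by rw [hqdef]; linarith
      set C := ∑ i ∈ J, (b i - a i)^2 with hCdef
      have hC0 : 0 ≤ C := Finset.sum_nonneg fun i _ => sq_nonneg _
      have hqC : q*lam^2 + C ≤ t := by
        have hdis2 : Disjoint (Γ \ Ω) J :=
          Finset.disjoint_of_subset_left Finset.sdiff_subset hdisjJΓ.symm
        have hsum : ∑ i ∈ (Γ \ Ω) ∪ J, (b i - a i)^2 ≤ t := by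
          rw [htdef]
          exact Finset.sum_le_sum_of_subset_of_nonneg (Finset.subset_univ _)
            (fun i _ _ => sq_nonneg _)
        rw [Finset.sum_union hdis2] at hsum
        have hlow : ((Γ \ Ω).card : ℝ) * lam^2 ≤ ∑ i ∈ Γ \ Ω, (b i - a i)^2 := by
          have hpt : ∀ i ∈ Γ \ Ω, lam^2 ≤ (b i - a i)^2 := by
            intro i hi
            obtain ⟨hiΓ, hiΩ⟩ := Finset.mem_sdiff.mp hi
            have haz : a i = 0 := by
              by_contra h; exact hiΩ (hΩ _ h)
            have h1 := hlamlb i hiΓ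
            rw [haz, sub_zero]
            calc lam^2 ≤ |b i|^2 := by nlinarith
            _ = (b i)^2 := sq_abs _
          have := Finset.card_nsmul_le_sum (Γ \ Ω) (fun i => (b i - a i)^2) (lam^2) hpt
          simpa [nsmul_eq_mul] using this
        have hcast : q ≤ ((Γ \ Ω).card : ℝ) := by
          have h2 : (↑(k - K + J.card) : ℝ) ≤ ((Γ \ Ω).card : ℝ) :=
            Nat.cast_le.mpr hΓOcard
          rw [Nat.cast_add, Nat.cast_sub hKk] at h2
          rw [hqdef]; exact h2
        have hq2 : q * lam^2 ≤ ((Γ \ Ω).card : ℝ) * lam^2 :=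
          mul_le_mul_of_nonneg_right hcast (sq_nonneg lam)
        linarith [hsum, hlow, hq2]
      have hpoint : ∑ i ∈ J, ((a i)^2 - (b i - a i)^2) ≤
          2*lam*(∑ i ∈ J, |b i - a i|) + m*lam^2 := by
        have hpt : ∀ i ∈ J, (a i)^2 - (b i - a i)^2 ≤ 2*lam*|b i - a i| + lam^2 := by
          intro i hi
          have hiΓ : i ∉ Γ := Finset.mem_compl.mp (hJc hi)
          have h1 : |a i| ≤ |b i - a i| + lam := by
            calc |a i| = |(a i - b i) + b i| := by ring_nf
            _ ≤ |a i - b i| + |b i| := abs_add_le _ _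
            _ = |b i - a i| + |b i| := by rw [abs_sub_comm]
            _ ≤ |b i - a i| + lam := by linarith [hlamub i hiΓ]
          have h2 : (a i)^2 ≤ (|b i - a i| + lam)^2 := by
            rw [← sq_abs (a i)]
            exact pow_le_pow_left₀ (abs_nonneg _) h1 2
          have h3 : (|b i - a i| + lam)^2
              = (b i - a i)^2 + 2*lam*|b i - a i| + lam^2 := by
            rw [add_sq, sq_abs]; ring
          linarith
        calc ∑ i ∈ J, ((a i)^2 - (b i - a i)^2)
            ≤ ∑ i ∈ J, (2*lam*|b i - a i| + lam^2) := Finset.sum_le_sum hpt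
          _ = 2*lam*(∑ i ∈ J, |b i - a i|) + m*lam^2 := by
              rw [Finset.sum_add_distrib, Finset.mul_sum, Finset.sum_const,
                nsmul_eq_mul]
      have hcauchy : ∑ i ∈ J, |b i - a i| ≤ Real.sqrt (m * C) := by
        rw [Real.le_sqrt (Finset.sum_nonneg fun i _ => abs_nonneg _)
          (mul_nonneg (by linarith) hC0)]
        have h := sq_sum_le_card_mul_sum_sq (s := J) (f := fun i => |b i - a i|)
        calc (∑ i ∈ J, |b i - a i|)^2 ≤ J.card * ∑ i ∈ J, |b i - a i|^2 := h
        _ = m * C := by rw [hmdef, hCdef]; congr 1; exact Finset.sum_congr rfl fun i _ => sq_abs _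
      have hcore := core_lemma m q lam C t hm1 hmq hC0 hqC
      have hΔ2 : ∑ i ∈ J, ((a i)^2 - (b i - a i)^2) ≤
          ((m/q + Real.sqrt ((4+m/q)*(m/q)))/2) * t := by
        have hmid : 2*lam*(∑ i ∈ J, |b i - a i|) ≤ 2*lam*Real.sqrt (m*C) := by
          apply mul_le_mul_of_nonneg_left hcauchy (by linarith)
        linarith [hpoint, hcore]
      have hρmono : m/q ≤ ρ' := by
        have hmsk : m ≤ (s:ℝ) - (k:ℝ) := by
          have h2 : ((J.card:ℝ) + (k:ℝ)) ≤ (s:ℝ) := by exact_mod_cast hms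
          simp only [hmdef]; linarith
        have hmK' : m ≤ (K:ℝ) := by simp only [hmdef]; exact_mod_cast hmK
        have hmm' : m ≤ min (K:ℝ) ((s:ℝ) - (k:ℝ)) := le_min hmK' hmsk
        have hqpos : (0:ℝ) < q := by linarith
        have hq'pos : (0:ℝ) < (k:ℝ) - (K:ℝ) + min (K:ℝ) ((s:ℝ) - (k:ℝ)) := by
          have : q ≤ (k:ℝ) - (K:ℝ) + min (K:ℝ) ((s:ℝ) - (k:ℝ)) := by
            rw [hqdef]; linarith
          linarith
        rw [hρ', div_le_div_iff₀ hqpos hq'pos, hqdef]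
        nlinarith [mul_nonneg (sub_nonneg.mpr hmm') (sub_nonneg.mpr hKkR)]
      have hβmono := beta_mono (m/q) ρ'
        (div_nonneg (by linarith) (by linarith)) hρmono
      have hfin : ((m/q + Real.sqrt ((4+m/q)*(m/q)))/2) * t ≤
          ((ρ' + Real.sqrt ((4+ρ')*ρ'))/2) * t :=
        mul_le_mul_of_nonneg_right hβmono ht0
      rw [hν']
      have : (1 + (ρ' + Real.sqrt ((4 + ρ') * ρ') ) / 2) * t
          = t + ((ρ' + Real.sqrt ((4+ρ')*ρ'))/2) * t := by ring
      rw [this]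
      linarith [hNle, hΔ2, hfin]
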